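/- For every n ≥ 1, the operator identity expansion (∂_ψ − id)^n applied to X^{n−1} gives (∂_ψ − id)^n(X^{n−1}) = Σ_{k=1}^{n} (−1)^k·C(n,k)·(n−1)_ψ^{\underline{n−k}}·X^{k−1}, where C(n,k) is the ordinary binomial coefficient and (m)_ψ^{\underline{j}} := ∏_{i=0}^{j−1} (m−i)_ψ denotes the ψ-falling factorial (with (m)_ψ^{\underline{0}} := 1). -/

import Mathlib

open Polynomial Finset

private lemma neg_one_pow_end_apply {K : Type*} [Field K] (c : ℕ) (p : Polynomial K) :
    ((-1 : Module.End K (Polynomial K))^c) p = ((-1:K)^c) • p := by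
  induction c with
  | zero => simp
  | succ c ih =>
    rw [pow_succ, Module.End.mul_apply, LinearMap.neg_apply, Module.End.one_apply]
    simp [ih, pow_succ]

/-- For every `n ≥ 1`,
`(∂_ψ − id)^n (X^(n-1)) = Σ_{k=1}^{n} (−1)^k C(n,k) (n−1)_ψ^{\underline{n−k}} • X^(k-1)`,
where `C(n,k)` is the ordinary binomial coefficient and
`(m)_ψ^{\underline{j}} := ∏_{i=0}^{j−1} (m−i)_ψ` is the ψ-falling factorial. -/
theorem stmt13 {K : Type*} [Field K] [CharZero K]
    (ψ : ℕ → K) (hψ : ∀ n, ψ n ≠ 0)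
    (nψ : ℕ → K) (hnψ0 : nψ 0 = 0)
    (hnψ : ∀ n : ℕ, 1 ≤ n → nψ n = ψ (n - 1) / ψ n)
    (hadm : ∀ n : ℕ, 1 ≤ n → nψ n ≠ 0)
    (D : Polynomial K →ₗ[K] Polynomial K)
    (hD : ∀ n : ℕ, D (X ^ (n + 1)) = nψ (n + 1) • X ^ n)
    (hD1 : D 1 = 0) :
    ∀ n : ℕ, 1 ≤ n →
      (((D - LinearMap.id : Module.End K (Polynomial K)) ^ n) (X ^ (n - 1))) =
        ∑ k ∈ Finset.Icc 1 n,
          ((-1 : K) ^ k * (n.choose k : K) *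
            ∏ i ∈ Finset.range (n - k), nψ (n - 1 - i)) • X ^ (k - 1) := by
  have key : ∀ j m : ℕ, j ≤ m →
      (D ^ j) (X ^ m : K[X]) = (∏ i ∈ range j, nψ (m - i)) • X ^ (m - j) := by
    intro j
    induction j with
    | zero => simp
    | succ j ih =>
      intro m hm
      have h1 : j ≤ m := by omega
      rw [pow_succ', Module.End.mul_apply, ih m h1, map_smul]
      rw [show m - j = (m - j - 1) + 1 from by omega, hD, prod_range_succ, smul_smul,
        show m - j - 1 + 1 = m - j from by omega, show m - (j+1) = m - j - 1 from by omega]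
  have key0 : ∀ j m : ℕ, m < j → (D ^ j) (X ^ m : K[X]) = 0 := by
    intro j m h
    obtain ⟨t, rfl⟩ : ∃ t, j = t + (m + 1) := ⟨j - (m+1), by omega⟩
    rw [pow_add, Module.End.mul_apply, pow_succ', Module.End.mul_apply, key m m le_rfl]
    simp [hD1]
  intro n hn
  have hc : Commute (D : Module.End K (Polynomial K)) (-1) := (Commute.one_right D).neg_right
  have hsub : (D - LinearMap.id : Module.End K (Polynomial K)) = D + (-1) := by
    rw [sub_eq_add_neg]; rfl
  rw [hsub, hc.add_pow n, LinearMap.sum_apply]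
  have hterm : ∀ m ∈ range (n+1),
      ((D : Module.End K (Polynomial K)) ^ m * (-1) ^ (n - m) *
        (n.choose m : Module.End K (Polynomial K))) (X ^ (n-1)) =
      if m ≤ n - 1 then
        ((-1:K)^(n-m) * (n.choose m : K) * ∏ i ∈ range m, nψ (n - 1 - i)) • X ^ (n - 1 - m)
      else 0 := by
    intro m hm
    rw [Module.End.mul_apply, Module.End.mul_apply, Module.End.natCast_apply,
      neg_one_pow_end_apply, map_smul, map_nsmul]
    by_cases hle : m ≤ n - 1
    · rw [if_pos hle, key m (n-1) hle]
      simp only [← Nat.cast_smul_eq_nsmul K, smul_smul]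
      congr 1
      ring
    · rw [if_neg hle, key0 m (n-1) (by omega)]
      simp
  rw [Finset.sum_congr rfl hterm, Finset.sum_range_succ, if_neg (by omega), add_zero]
  rw [Finset.sum_congr rfl (fun m hm => if_pos (by simp at hm; omega))]
  rw [← Finset.sum_range_reflect]
  have hIcc : Finset.Icc 1 n =
      Finset.map ⟨fun j => j + 1, add_left_injective 1⟩ (Finset.range n) := by
    ext a
    simp only [Finset.mem_Icc, Finset.mem_map, Finset.mem_range, Function.Embedding.coeFn_mk]
    constructor
    · rintro ⟨h1, h2⟩; exact ⟨a - 1, by omega, by omega⟩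
    · rintro ⟨b, hb, rfl⟩; omega
  rw [hIcc, Finset.sum_map]
  apply Finset.sum_congr rfl
  intro j hj
  simp only [Function.Embedding.coeFn_mk]
  have hj' : j < n := Finset.mem_range.mp hj
  rw [show n - (n - 1 - j) = j + 1 from by omega,
    show n - 1 - (n - 1 - j) = j from by omega,
    show n.choose (n - 1 - j) = n.choose (j + 1) from by
      rw [show n - 1 - j = n - (j+1) from by omega, Nat.choose_symm (by omega)],
    show n - 1 - j = n - (j + 1) from by omega,
    show j + 1 - 1 = j from rfl]
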